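/- arXiv:2302.13719 — 4 statements merged into one kernel-verified Lean document; each statement's English description precedes it below -/
import Mathlib

section
/- The subalgebra of symmetric polynomials in n variables over a commutative ring R is generated, as an R-algebra, by the elementary symmetric polynomials e_1, ..., e_n; equivalently, every polynomial in R[x_1,...,x_n] invariant under all permutations of the variables can be written as a polynomial in e_1, ..., e_n. -/
/-- The fundamental theorem of symmetric polynomials (generation statement):
every symmetric polynomial in `n` variables over a commutative ring `R` lies in the
`R`-subalgebra generated by the elementary symmetric polynomials `e_1, ..., e_n`. -/
theorem symmetric_polynomials_generated_by_esymm
    (R : Type) [CommRing R] (n : ℕ) (hn : 1 ≤ n)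
    (p : MvPolynomial (Fin n) R) (hp : p.IsSymmetric) :
    p ∈ Algebra.adjoin R
      {q : MvPolynomial (Fin n) R | ∃ k, 1 ≤ k ∧ k ≤ n ∧ q = MvPolynomial.esymm (Fin n) R k} := by
  obtain ⟨q, hq⟩ := MvPolynomial.esymmAlgHom_surjective (σ := Fin n) R
    (le_of_eq (Fintype.card_fin n)) ⟨p, hp⟩
  have hq' : p = MvPolynomial.aeval
      (fun i : Fin n => MvPolynomial.esymm (Fin n) R (i + 1)) q := by
    have := congrArg Subtype.val hq
    rw [MvPolynomial.esymmAlgHom_apply] at this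
    exact this.symm
  rw [hq']
  have : MvPolynomial.aeval (fun i : Fin n => MvPolynomial.esymm (Fin n) R (i + 1)) q ∈
      Algebra.adjoin R (Set.range fun i : Fin n => MvPolynomial.esymm (Fin n) R (i + 1)) := by
    rw [Algebra.adjoin_range_eq_range_aeval]
    exact ⟨q, rfl⟩
  refine Algebra.adjoin_mono ?_ this
  rintro _ ⟨i, rfl⟩
  exact ⟨i + 1, Nat.succ_le_succ (Nat.zero_le _), Nat.succ_le_of_lt i.isLt, rfl⟩
end

section
/- For every prime number p, the congruence x^8 ≡ 16 (mod p) has a solution, yet 16 is not an 8th power of a rational number. -/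
/-- For every prime `p`, the congruence `x^8 ≡ 16 (mod p)` has a solution,
yet `16` is not an 8th power of a rational number. -/
theorem sixteen_is_eighth_power_mod_every_prime_but_not_rational :
    (∀ p : ℕ, p.Prime → ∃ x : ZMod p, x ^ 8 = 16) ∧ ¬ ∃ q : ℚ, q ^ 8 = 16 := by
  constructor
  · intro p hp
    haveI : Fact p.Prime := ⟨hp⟩
    rcases eq_or_ne p 2 with rfl | hp2
    · exact ⟨0, rfl⟩
    · have hchar : ringChar (ZMod p) ≠ 2 := by
        rw [ZMod.ringChar_zmod_n]; exact hp2
      by_cases h2 : IsSquare (2 : ZMod p)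
      · obtain ⟨a, ha⟩ := h2
        exact ⟨a, by linear_combination (a^6 + 2*a^4 + 4*a^2 + 8) * ha.symm⟩
      by_cases hneg : IsSquare (-1 : ZMod p)
      · obtain ⟨i, hi⟩ := hneg
        refine ⟨1 + i, ?_⟩
        linear_combination (i^6 + 8*i^5 + 27*i^4 + 48*i^3 + 43*i^2 + 8*i - 15) * hi.symm
      · have hm2 : IsSquare (-2 : ZMod p) := by
          have h1 : quadraticChar (ZMod p) (-1) = -1 :=
            quadraticChar_neg_one_iff_not_isSquare.mpr hneg
          have h2' : quadraticChar (ZMod p) 2 = -1 :=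
            quadraticChar_neg_one_iff_not_isSquare.mpr h2
          have : quadraticChar (ZMod p) (-2) = 1 := by
            have : (-2 : ZMod p) = -1 * 2 := by ring
            rw [this, map_mul, h1, h2']; ring
          have hne : (-2 : ZMod p) ≠ 0 := by
            intro h
            exact Ring.two_ne_zero hchar (by linear_combination -h)
          exact (quadraticChar_one_iff_isSquare hne).mp this
        obtain ⟨a, ha⟩ := hm2
        exact ⟨a, by linear_combination (a^6 - 2*a^4 + 4*a^2 - 8) * ha.symm⟩
  · rintro ⟨q, hq⟩
    have h4 : q ^ 4 = 4 := by
      have hsq : (q ^ 4) ^ 2 = 4 ^ 2 := by rw [← pow_mul]; norm_num [hq]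
      rcases sq_eq_sq_iff_eq_or_eq_neg.mp hsq with h | h
      · exact h
      · nlinarith [sq_nonneg (q ^ 2)]
    have h2 : (q ^ 2) ^ 2 = 2 ^ 2 := by rw [← pow_mul]; norm_num [h4]
    have hq2 : q ^ 2 = 2 := by
      rcases sq_eq_sq_iff_eq_or_eq_neg.mp h2 with h | h
      · exact h
      · nlinarith [sq_nonneg q]
    have hr : ((q : ℝ)) ^ 2 = 2 := by exact_mod_cast congrArg (fun x : ℚ => (x : ℝ)) hq2
    have habs : ((|q| : ℚ) : ℝ) = Real.sqrt 2 := by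
      push_cast
      rw [← Real.sqrt_sq_eq_abs, hr]
    exact Rat.not_irrational |q| (habs ▸ irrational_sqrt_two)
end

section
/- Every finite group is isomorphic to a quotient of a finite group with trivial centre. -/
open SemidirectProduct

abbrev S3' : Type := Equiv.Perm (Fin 3)

def shiftAut (G : Type) [Group G] (g : G) : (G → S3') ≃* (G → S3') where
  toFun f := fun x => f (g⁻¹ * x)
  invFun f := fun x => f (g * x)
  left_inv f := by funext x; simp [← mul_assoc]
  right_inv f := by funext x; simp [← mul_assoc]
  map_mul' f₁ f₂ := rfl

def shiftHom (G : Type) [Group G] : G →* MulAut (G → S3') where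
  toFun := shiftAut G
  map_one' := by ext f x; simp [shiftAut]
  map_mul' g₁ g₂ := by ext f x; simp [shiftAut, mul_assoc]

/-- Every finite group is isomorphic to a quotient of a finite group with trivial centre. -/
theorem exists_finite_centerless_group_with_surjection_onto
    (G : Type) [Group G] [Finite G] :
    ∃ (H : Type) (_ : Group H), Finite H ∧ Subgroup.center H = ⊥ ∧
      ∃ f : H →* G, Function.Surjective f := by
  classical
  haveI : Finite ((G → S3') ⋊[shiftHom G] G) :=
    Finite.of_injective (fun h => (h.left, h.right))
      (fun a b hab => by
        cases a; cases b
        simp only [Prod.mk.injEq] at hab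
        simp [hab.1, hab.2])
  refine ⟨(G → S3') ⋊[shiftHom G] G, inferInstance, inferInstance, ?_,
    rightHom, fun g => ⟨⟨1, g⟩, rfl⟩⟩
  rw [eq_bot_iff]
  intro h hh
  rw [Subgroup.mem_center_iff] at hh
  obtain ⟨f, g⟩ := h
  have key : ∀ f' : G → S3', ∀ x : G, f' x * f x = f x * f' (g⁻¹ * x) := by
    intro f' x
    have := hh ⟨f', 1⟩
    have h1 := congrFun (congrArg SemidirectProduct.left this) x
    simp only [SemidirectProduct.mul_left] at h1
    simpa [shiftHom, shiftAut] using h1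
  have hg : g = 1 := by
    by_contra hg
    have := key (fun y => if y = g⁻¹ then Equiv.swap 0 1 else 1) 1
    rw [mul_one, if_pos rfl, if_neg (fun h => hg (inv_eq_one.mp h.symm)), one_mul] at this
    have hs : (Equiv.swap (0:Fin 3) 1) = 1 :=
      mul_left_cancel (a := f 1) (by simpa using this.symm)
    exact absurd hs (by decide)
  subst hg
  have hf : f = 1 := by
    funext x
    have comm : ∀ s : S3', s * f x = f x * s := by
      intro s
      exact key (fun _ => s) x
    have triv : ∀ a : S3', (∀ s : S3', s * a = a * s) → a = 1 := by decide
    exact triv _ comm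
  subst hf
  rfl
end

section
/- Let K/k be a finite Galois field extension with Galois group Γ and let n ≥ 1. Then the first nonabelian Galois cohomology set H^1(Γ, GL_n(K)) is trivial: every 1-cocycle c : Γ → GL_n(K) (satisfying c(στ) = c(σ)·σ(c(τ))) is of the form c(σ) = b⁻¹·σ(b) for some b ∈ GL_n(K). -/
open Matrix

/-- Dedekind's independence of characters, as in mathlib's Hilbert 90 file. -/
theorem hilbert90_GLn_dedekind (k K : Type) [Field k] [Field K] [Algebra k K] :
    LinearIndependent K (fun σ : K ≃ₐ[k] K => (σ : K → K)) :=
  LinearIndependent.comp (ι' := K ≃ₐ[k] K)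
    (linearIndependent_monoidHom K K) (fun f => f)
    (fun x y h => by ext; exact DFunLike.ext_iff.1 h _)

/-- The key spanning lemma: the columns of the matrices `∑ σ, σ(x) • c σ` span `K^n`. -/
theorem hilbert90_GLn_span
    (k K : Type) [Field k] [Field K] [Algebra k K] [FiniteDimensional k K]
    (n : ℕ) (c : (K ≃ₐ[k] K) → GL (Fin n) K) :
    Submodule.span K {y : Fin n → K | ∃ (x : K) (j : Fin n),
        y = fun i => ∑ σ : K ≃ₐ[k] K, σ x * (c σ : Matrix (Fin n) (Fin n) K) i j} = ⊤ := by
  by_contra hne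
  obtain ⟨f, hf0, hker⟩ := Submodule.exists_dual_map_eq_bot_of_lt_top
    (lt_top_iff_ne_top.2 hne) inferInstance
  set w : Fin n → K := fun i => f (fun j => if i = j then 1 else 0) with hw
  have hfy : ∀ y : Fin n → K, f y = ∑ i, y i * w i := by
    intro y
    simpa [hw, smul_eq_mul] using LinearMap.pi_apply_eq_sum_univ f y
  have hS : ∀ (x : K) (j : Fin n),
      ∑ σ : K ≃ₐ[k] K, σ x * (∑ i, (c σ : Matrix (Fin n) (Fin n) K) i j * w i) = 0 := by
    intro x j
    have hmem : (fun i => ∑ σ : K ≃ₐ[k] K, σ x * (c σ : Matrix (Fin n) (Fin n) K) i j)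
        ∈ Submodule.span K {y : Fin n → K | ∃ (x : K) (j : Fin n),
          y = fun i => ∑ σ : K ≃ₐ[k] K, σ x * (c σ : Matrix (Fin n) (Fin n) K) i j} :=
      Submodule.subset_span ⟨x, j, rfl⟩
    have h0 : f (fun i => ∑ σ : K ≃ₐ[k] K, σ x * (c σ : Matrix (Fin n) (Fin n) K) i j) = 0 := by
      have := hker ▸ Submodule.mem_map_of_mem (f := f) hmem
      simpa using this
    rw [hfy] at h0
    rw [← h0]
    simp_rw [Finset.sum_mul, Finset.mul_sum]
    rw [Finset.sum_comm]
    exact Finset.sum_congr rfl fun σ _ => Finset.sum_congr rfl fun i _ => by ring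
  have hzero : ∀ (j : Fin n) (σ : K ≃ₐ[k] K),
      (∑ i, (c σ : Matrix (Fin n) (Fin n) K) i j * w i) = 0 := by
    intro j σ
    refine Fintype.linearIndependent_iff.1 (hilbert90_GLn_dedekind k K)
      (fun σ => ∑ i, (c σ : Matrix (Fin n) (Fin n) K) i j * w i) ?_ σ
    funext x
    simpa [mul_comm] using hS x j
  have hwz : w = 0 := by
    have hinj : Function.Injective (Matrix.vecMul · ((c 1 : Matrix (Fin n) (Fin n) K))) := by
      exact Matrix.vecMul_injective_iff_isUnit.2 (c 1).isUnit
    have : Matrix.vecMul w (c 1 : Matrix (Fin n) (Fin n) K)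
        = Matrix.vecMul 0 (c 1 : Matrix (Fin n) (Fin n) K) := by
      funext j
      have h := hzero j 1
      simp only [Matrix.zero_vecMul, Pi.zero_apply, Matrix.vecMul, dotProduct,
        zero_mul, Finset.sum_const_zero]
      calc ∑ i, w i * (c 1 : Matrix (Fin n) (Fin n) K) i j
          = ∑ i, (c 1 : Matrix (Fin n) (Fin n) K) i j * w i :=
            Finset.sum_congr rfl fun i _ => mul_comm _ _
        _ = 0 := h
    exact hinj this
  apply hf0
  refine LinearMap.ext fun y => ?_
  rw [hfy, hwz]
  simp

/-- Hilbert's Theorem 90 for `GL_n`: for a finite Galois extension `K/k` with group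
`Γ = Gal(K/k)`, every 1-cocycle `c : Γ → GL_n(K)` (with `Γ` acting entrywise) is a
coboundary: `c(σ) = b⁻¹ ⬝ σ(b)` for some `b ∈ GL_n(K)`. -/
theorem hilbert90_GLn
    (k K : Type) [Field k] [Field K] [Algebra k K] [FiniteDimensional k K] [IsGalois k K]
    (n : ℕ) (c : (K ≃ₐ[k] K) → GL (Fin n) K)
    (hc : ∀ σ τ : K ≃ₐ[k] K,
      ((c (σ * τ) : Matrix (Fin n) (Fin n) K))
        = (c σ : Matrix (Fin n) (Fin n) K) * (c τ : Matrix (Fin n) (Fin n) K).map σ) :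
    ∃ b : GL (Fin n) K, ∀ σ : K ≃ₐ[k] K,
      (c σ : Matrix (Fin n) (Fin n) K)
        = (↑(b⁻¹) : Matrix (Fin n) (Fin n) K) * (b : Matrix (Fin n) (Fin n) K).map σ := by
  classical
  set S : Set (Fin n → K) := {y : Fin n → K | ∃ (x : K) (j : Fin n),
      y = fun i => ∑ σ : K ≃ₐ[k] K, σ x * (c σ : Matrix (Fin n) (Fin n) K) i j} with hSdef
  have hspan : Submodule.span K S = ⊤ := hilbert90_GLn_span k K n c
  obtain ⟨s, hsS, hsspan, hsli⟩ := exists_linearIndependent K S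
  rw [hspan] at hsspan
  let bs : Module.Basis s K (Fin n → K) := Module.Basis.mk hsli (by rw [Subtype.range_coe, hsspan])
  let e : s ≃ Fin n := bs.indexEquiv (Pi.basisFun K (Fin n))
  let u : Fin n → (Fin n → K) := fun j => ((e.symm j : s) : Fin n → K)
  have hu_li : LinearIndependent K u :=
    hsli.comp e.symm e.symm.injective
  have hu_mem : ∀ j, u j ∈ S := fun j => hsS (e.symm j).2
  choose x m hxm using fun j => hu_mem j
  -- the matrix A with columns `x j • e_{m j}`
  set A : Matrix (Fin n) (Fin n) K :=
    Matrix.of (fun i j => if i = m j then x j else 0) with hA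
  set B : Matrix (Fin n) (Fin n) K :=
    ∑ σ : K ≃ₐ[k] K, (c σ : Matrix (Fin n) (Fin n) K) * A.map σ with hBdef
  have hBu : B = (Matrix.of u)ᵀ := by
    ext i j
    have h1 : u j i = ∑ σ : K ≃ₐ[k] K, σ (x j) * (c σ : Matrix (Fin n) (Fin n) K) i (m j) :=
      congrFun (hxm j) i
    simp only [hBdef, Matrix.sum_apply, Matrix.mul_apply, Matrix.map_apply, hA,
      Matrix.of_apply, Matrix.transpose_apply, apply_ite, map_zero, mul_ite, mul_zero]
    rw [h1]
    congr 1; ext σ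
    rw [Finset.sum_ite_eq' Finset.univ (m j)]
    simp [mul_comm]
  have hB_unit : IsUnit B := by
    rw [hBu]
    refine Matrix.linearIndependent_cols_iff_isUnit.1 ?_
    simpa using hu_li
  -- `B` satisfies `c σ * σ(B) = B`
  have key : ∀ σ : K ≃ₐ[k] K,
      (c σ : Matrix (Fin n) (Fin n) K) * B.map σ = B := by
    intro σ
    have hmap : B.map σ
        = ∑ ρ : K ≃ₐ[k] K,
            ((c ρ : Matrix (Fin n) (Fin n) K) * A.map ρ).map σ := by
      ext i j
      simp only [hBdef, Matrix.map_apply, Matrix.sum_apply, map_sum]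
    rw [hmap, Finset.mul_sum, hBdef]
    rw [show (∑ ρ : K ≃ₐ[k] K, (c ρ : Matrix (Fin n) (Fin n) K) * A.map ρ)
        = ∑ ρ : K ≃ₐ[k] K, (c (σ * ρ) : Matrix (Fin n) (Fin n) K) * A.map (σ * ρ) from
      (Fintype.sum_bijective (fun ρ => σ * ρ) (Group.mulLeft_bijective σ) _ _
        (fun ρ => rfl)).symm]
    refine Finset.sum_congr rfl fun ρ _ => ?_
    have hmm : (A.map ρ).map σ = A.map ((σ * ρ : K ≃ₐ[k] K) : K → K) := by
      rw [Matrix.map_map]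
      rfl
    have hmul : ((c ρ : Matrix (Fin n) (Fin n) K) * A.map ρ).map (σ : K → K)
        = (c ρ : Matrix (Fin n) (Fin n) K).map σ * (A.map ρ).map σ := by
      ext i j
      simp [Matrix.map_apply, Matrix.mul_apply, map_sum, _root_.map_mul]
    rw [hmul, ← mul_assoc, ← hc σ ρ, hmm]
  -- conclude
  set B' : GL (Fin n) K := hB_unit.unit with hB'
  have hB'c : (B' : Matrix (Fin n) (Fin n) K) = B := hB_unit.unit_spec
  refine ⟨B'⁻¹, fun σ => ?_⟩
  set fσ : Matrix (Fin n) (Fin n) K →* Matrix (Fin n) (Fin n) K :=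
    ((AlgEquiv.mapMatrix σ : Matrix (Fin n) (Fin n) K ≃ₐ[k]
        Matrix (Fin n) (Fin n) K) : Matrix (Fin n) (Fin n) K →ₐ[k]
        Matrix (Fin n) (Fin n) K).toRingHom.toMonoidHom with hfσ
  have hfσ_apply : ∀ M : Matrix (Fin n) (Fin n) K, fσ M = M.map σ := fun M => rfl
  have keyu : c σ * Units.map fσ B' = B' := by
    apply Units.ext
    rw [Units.val_mul, Units.coe_map]
    show (c σ : Matrix (Fin n) (Fin n) K) * fσ (B' : Matrix (Fin n) (Fin n) K) = B
    rw [hfσ_apply, hB'c]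
    exact key σ
  have hcσ : c σ = B' * (Units.map fσ B')⁻¹ := eq_mul_inv_of_mul_eq keyu
  rw [hcσ, ← map_inv (Units.map fσ) B', inv_inv]
  rw [Units.val_mul, Units.coe_map]
  show _ * fσ ((B'⁻¹ : GL (Fin n) K) : Matrix (Fin n) (Fin n) K) = _
  rw [hfσ_apply]
end
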